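/- arXiv:1801.09613 — 3 statements merged into one kernel-verified Lean document; each statement's English description precedes it below -/
import Mathlib

section
/- Conservation of the separation constant for the reference Kepler Hamiltonian centered at o₁: if I ⊆ ℝ is an open interval and q, p : I → ℝ³ are differentiable with q(t) ≠ o₁, q'(t) = p(t), and p'(t) = −∇V_{r₁}(q(t)) for all t ∈ I, then t ↦ G_{r₁}(q(t), p(t)) is constant on I. -/
noncomputable section

open Real Filter Topology
open scoped RealInnerProductSpace

/-- Euclidean 3-space. -/
abbrev R3 : Type := EuclideanSpace ℝ (Fin 3)

/-- The vector `(x, y, z)` in `R3`. -/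
def vec3 (x y z : ℝ) : R3 := (WithLp.equiv 2 (Fin 3 → ℝ)).symm ![x, y, z]

/-- The first center `o₁ = (0,0,-a)`. -/
def ctr1 (a : ℝ) : R3 := vec3 0 0 (-a)

/-- The second center `o₂ = (0,0,a)`. -/
def ctr2 (a : ℝ) : R3 := vec3 0 0 a

/-- The Euler two-center potential `V(q) = -μ₁/r₁(q) - μ₂/r₂(q)`. -/
def eulerV (a μ1 μ2 : ℝ) (q : R3) : ℝ := -μ1 / ‖q - ctr1 a‖ - μ2 / ‖q - ctr2 a‖

/-- The angular momentum `L_z(q,p) = x p_y - y p_x`. -/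
def angMom (q p : R3) : ℝ := q 0 * p 1 - q 1 * p 0

/-- The cross product `q × p` in `R3`. -/
def cross3 (q p : R3) : R3 :=
  vec3 (q 1 * p 2 - q 2 * p 1) (q 2 * p 0 - q 0 * p 2) (q 0 * p 1 - q 1 * p 0)

/-- The Euler Hamiltonian `H(q,p) = ‖p‖²/2 + V(q)`. -/
def eulerH (a μ1 μ2 : ℝ) (q p : R3) : ℝ := ‖p‖ ^ 2 / 2 + eulerV a μ1 μ2 q

/-- The separation constant
`G(q,p) = H + (‖q×p‖² - a²(pₓ²+p_y²))/2 + a(z+a)μ₁/r₁ - a(z-a)μ₂/r₂`. -/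
def eulerG (a μ1 μ2 : ℝ) (q p : R3) : ℝ :=
  eulerH a μ1 μ2 q p + (‖cross3 q p‖ ^ 2 - a ^ 2 * ((p 0) ^ 2 + (p 1) ^ 2)) / 2
    + a * (q 2 + a) * μ1 / ‖q - ctr1 a‖ - a * (q 2 - a) * μ2 / ‖q - ctr2 a‖

/-- The reference Kepler potential at `o₁`: `V_{r₁}(q) = -(μ₁-μ₂)/r₁(q)`. -/
def kepV1 (a μ1 μ2 : ℝ) (q : R3) : ℝ := -(μ1 - μ2) / ‖q - ctr1 a‖

/-- The reference Kepler Hamiltonian at `o₁`. -/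
def kepH1 (a μ1 μ2 : ℝ) (q p : R3) : ℝ := ‖p‖ ^ 2 / 2 + kepV1 a μ1 μ2 q

/-- The separation constant of the reference Kepler system at `o₁`. -/
def kepG1 (a μ1 μ2 : ℝ) (q p : R3) : ℝ :=
  kepH1 a μ1 μ2 q p + (‖cross3 q p‖ ^ 2 - a ^ 2 * ((p 0) ^ 2 + (p 1) ^ 2)) / 2
    + a * (q 2 + a) * (μ1 - μ2) / ‖q - ctr1 a‖

lemma norm3 (v : R3) : ‖v‖ = Real.sqrt (v 0 ^ 2 + v 1 ^ 2 + v 2 ^ 2) := by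
  simp [EuclideanSpace.norm_eq, Fin.sum_univ_three, sq_abs]
lemma normsq3 (v : R3) : ‖v‖ ^ 2 = v 0 ^ 2 + v 1 ^ 2 + v 2 ^ 2 := by
  rw [norm3]; exact Real.sq_sqrt (by positivity)
lemma sub_ctr1_0 (a : ℝ) (v : R3) : (v - ctr1 a) 0 = v 0 := by simp [ctr1, vec3]
lemma sub_ctr1_1 (a : ℝ) (v : R3) : (v - ctr1 a) 1 = v 1 := by simp [ctr1, vec3]
lemma sub_ctr1_2 (a : ℝ) (v : R3) : (v - ctr1 a) 2 = v 2 + a := by simp [ctr1, vec3]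
lemma norm_sub_ctr1 (a : ℝ) (v : R3) :
    ‖v - ctr1 a‖ = Real.sqrt (v 0 ^ 2 + v 1 ^ 2 + (v 2 + a) ^ 2) := by
  rw [norm3, sub_ctr1_0, sub_ctr1_1, sub_ctr1_2]
lemma cross3_0 (q p : R3) : cross3 q p 0 = q 1 * p 2 - q 2 * p 1 := by simp [cross3, vec3]
lemma cross3_1 (q p : R3) : cross3 q p 1 = q 2 * p 0 - q 0 * p 2 := by simp [cross3, vec3]
lemma cross3_2 (q p : R3) : cross3 q p 2 = q 0 * p 1 - q 1 * p 0 := by simp [cross3, vec3]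

lemma grad_kepV1 (a μ1 μ2 : ℝ) (q : R3) (h : q ≠ ctr1 a) :
    gradient (kepV1 a μ1 μ2) q
      = ((μ1 - μ2) / ‖q - ctr1 a‖ ^ 3) • (q - ctr1 a) := by
  have hy : q - ctr1 a ≠ 0 := sub_ne_zero.mpr h
  have hr : (0:ℝ) < ‖q - ctr1 a‖ := norm_pos_iff.mpr hy
  have h1 : HasFDerivAt (fun v : R3 => ‖v - ctr1 a‖ ^ 2)
      (2 • (innerSL ℝ (q - ctr1 a))) q := by
    have := ((hasFDerivAt_id q).sub_const (ctr1 a)).norm_sq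
    simpa using this
  have h2 : HasFDerivAt (fun v : R3 => ‖v - ctr1 a‖)
      ((2 * ‖q - ctr1 a‖)⁻¹ • (2 • (innerSL ℝ (q - ctr1 a)))) q := by
    have hs : HasDerivAt Real.sqrt (1 / (2 * Real.sqrt (‖q - ctr1 a‖^2))) (‖q - ctr1 a‖^2) :=
      Real.hasDerivAt_sqrt (by positivity)
    have := hs.comp_hasFDerivAt q h1
    simp only [Real.sqrt_sq (norm_nonneg _)] at this
    convert this using 2 <;> try rfl
    · exact (Real.sqrt_sq (norm_nonneg _)).symm
    · rw [one_div]
  have h3 : HasFDerivAt (fun v : R3 => (‖v - ctr1 a‖)⁻¹)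
      ((-(‖q - ctr1 a‖ ^ 2)⁻¹) • ((2 * ‖q - ctr1 a‖)⁻¹ • (2 • (innerSL ℝ (q - ctr1 a))))) q := by
    have hinv : HasDerivAt (fun x : ℝ => x⁻¹) (-(‖q - ctr1 a‖ ^ 2)⁻¹) (‖q - ctr1 a‖) :=
      hasDerivAt_inv (ne_of_gt hr)
    exact hinv.comp_hasFDerivAt q h2
  have h4 : HasFDerivAt (kepV1 a μ1 μ2)
      ((-(μ1-μ2)) • ((-(‖q - ctr1 a‖ ^ 2)⁻¹) • ((2 * ‖q - ctr1 a‖)⁻¹ • (2 • (innerSL ℝ (q - ctr1 a)))))) q := by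
    have hfun : kepV1 a μ1 μ2 = fun v : R3 => (-(μ1-μ2)) • (‖v - ctr1 a‖)⁻¹ := by
      funext v
      simp [kepV1, div_eq_mul_inv]
    rw [hfun]
    exact h3.const_smul (-(μ1-μ2))
  rw [h4.hasGradientAt.gradient]
  have hM : InnerProductSpace.toDual ℝ R3 (((μ1 - μ2) / ‖q - ctr1 a‖ ^ 3) • (q - ctr1 a))
      = ((-(μ1-μ2)) • ((-(‖q - ctr1 a‖ ^ 2)⁻¹) • ((2 * ‖q - ctr1 a‖)⁻¹ • (2 • (innerSL ℝ (q - ctr1 a)))))) := by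
    ext v
    simp only [InnerProductSpace.toDual_apply_apply, ContinuousLinearMap.smul_apply,
      ContinuousLinearMap.coe_smul', Pi.smul_apply, innerSL_apply_apply, smul_eq_mul,
      real_inner_smul_left]
    have h5 : ‖q - ctr1 a‖ ^ 3 = ‖q - ctr1 a‖ ^ 2 * ‖q - ctr1 a‖ := by ring
    rw [h5]
    field_simp
    ring
  rw [← hM, LinearIsometryEquiv.symm_apply_apply]


lemma kepG1_deriv_zero (a μ1 μ2 : ℝ) (q p : ℝ → R3) (t : ℝ)
    (hc : q t ≠ ctr1 a)
    (hq' : HasDerivAt q (p t) t)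
    (hp' : HasDerivAt p (-gradient (kepV1 a μ1 μ2) (q t)) t) :
    HasDerivAt (fun τ => kepG1 a μ1 μ2 (q τ) (p τ)) 0 t := by
  have hy : q t - ctr1 a ≠ 0 := sub_ne_zero.mpr hc
  have hrpos : (0:ℝ) < ‖q t - ctr1 a‖ := norm_pos_iff.mpr hy
  have hrne : ‖q t - ctr1 a‖ ≠ 0 := ne_of_gt hrpos
  have hp'' : HasDerivAt p (-(((μ1 - μ2) / ‖q t - ctr1 a‖ ^ 3) • (q t - ctr1 a))) t := by
    rw [← grad_kepV1 a μ1 μ2 (q t) hc]; exact hp'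
  -- coordinate derivatives
  have hq0 : HasDerivAt (fun τ => q τ 0) (p t 0) t := by
    have := (EuclideanSpace.proj (0:Fin 3) : R3 →L[ℝ] ℝ).hasFDerivAt.comp_hasDerivAt t hq'
    simp at this; exact this
  have hq1 : HasDerivAt (fun τ => q τ 1) (p t 1) t := by
    have := (EuclideanSpace.proj (1:Fin 3) : R3 →L[ℝ] ℝ).hasFDerivAt.comp_hasDerivAt t hq'
    simp at this; exact this
  have hq2 : HasDerivAt (fun τ => q τ 2) (p t 2) t := by
    have := (EuclideanSpace.proj (2:Fin 3) : R3 →L[ℝ] ℝ).hasFDerivAt.comp_hasDerivAt t hq'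
    simp at this; exact this
  have hp0 : HasDerivAt (fun τ => p τ 0) (-((μ1 - μ2) / ‖q t - ctr1 a‖ ^ 3 * q t 0)) t := by
    have := (EuclideanSpace.proj (0:Fin 3) : R3 →L[ℝ] ℝ).hasFDerivAt.comp_hasDerivAt t hp''
    simp [ctr1, vec3, Function.comp] at this; exact this
  have hp1 : HasDerivAt (fun τ => p τ 1) (-((μ1 - μ2) / ‖q t - ctr1 a‖ ^ 3 * q t 1)) t := by
    have := (EuclideanSpace.proj (1:Fin 3) : R3 →L[ℝ] ℝ).hasFDerivAt.comp_hasDerivAt t hp''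
    simp [ctr1, vec3, Function.comp] at this; exact this
  have hp2 : HasDerivAt (fun τ => p τ 2) (-((μ1 - μ2) / ‖q t - ctr1 a‖ ^ 3 * (q t 2 + a))) t := by
    have := (EuclideanSpace.proj (2:Fin 3) : R3 →L[ℝ] ℝ).hasFDerivAt.comp_hasDerivAt t hp''
    simp [ctr1, vec3, Function.comp, sub_neg_eq_add] at this; exact this
  -- derivative of the radius
  have hR : HasDerivAt (fun τ => (q τ 0)^2 + (q τ 1)^2 + (q τ 2 + a)^2)
      ((2 * q t 0 ^ 1 * p t 0 + 2 * q t 1 ^ 1 * p t 1) + 2 * (q t 2 + a) ^ 1 * p t 2) t := by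
    exact_mod_cast ((hq0.pow 2).add (hq1.pow 2)).add ((hq2.add_const a).pow 2)
  have hRpos : (0:ℝ) < (q t 0)^2 + (q t 1)^2 + (q t 2 + a)^2 := by
    have := hrpos
    rw [norm_sub_ctr1] at this
    exact Real.sqrt_pos.mp this
  have hS : HasDerivAt (fun τ => ‖q τ - ctr1 a‖)
      (1 / (2 * ‖q t - ctr1 a‖) *
        ((2 * q t 0 ^ 1 * p t 0 + 2 * q t 1 ^ 1 * p t 1) + 2 * (q t 2 + a) ^ 1 * p t 2)) t := by
    have := (Real.hasDerivAt_sqrt (ne_of_gt hRpos)).comp t hR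
    simpa only [Function.comp_def, ← norm_sub_ctr1] using this
  -- rewrite the function in coordinates
  have hgfun : (fun τ => kepG1 a μ1 μ2 (q τ) (p τ)) = fun τ =>
      ((p τ 0)^2 + (p τ 1)^2 + (p τ 2)^2) / 2 + -(μ1 - μ2) / ‖q τ - ctr1 a‖
      + (((q τ 1 * p τ 2 - q τ 2 * p τ 1)^2 + (q τ 2 * p τ 0 - q τ 0 * p τ 2)^2
          + (q τ 0 * p τ 1 - q τ 1 * p τ 0)^2) - a^2 * ((p τ 0)^2 + (p τ 1)^2)) / 2
      + a * (q τ 2 + a) * (μ1 - μ2) / ‖q τ - ctr1 a‖ := by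
    funext τ
    simp only [kepG1, kepH1, kepV1, normsq3, cross3_0, cross3_1, cross3_2]
  rw [hgfun]
  have H := ((((((hp0.pow 2).add (hp1.pow 2)).add (hp2.pow 2)).div_const 2).add
      ((hasDerivAt_const t (-(μ1 - μ2))).div hS hrne)).add
      (((((((hq1.mul hp2).sub (hq2.mul hp1)).pow 2).add
          (((hq2.mul hp0).sub (hq0.mul hp2)).pow 2)).add
          (((hq0.mul hp1).sub (hq1.mul hp0)).pow 2)).sub
        (((hp0.pow 2).add (hp1.pow 2)).const_mul (a^2))).div_const 2)).add
      ((((hq2.add_const a).const_mul a).mul_const (μ1 - μ2)).div hS hrne)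
  refine H.congr_deriv ?_
  symm
  simp only [Pi.sub_apply, Pi.mul_apply]
  have hr2 : ‖q t - ctr1 a‖ ^ 2 = (q t 0)^2 + (q t 1)^2 + (q t 2 + a)^2 := by
    rw [norm_sub_ctr1]; exact Real.sq_sqrt (le_of_lt hRpos)
  set r := ‖q t - ctr1 a‖ with hrdef
  set x0 := q t 0; set x1 := q t 1; set x2 := q t 2
  set y0 := p t 0; set y1 := p t 1; set y2 := p t 2
  field_simp
  ring_nf
  linear_combination (2*a*y2*(μ2-μ1)) * hr2

/-- Conservation of `G_{r₁}` along solutions of the reference Kepler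
problem centered at `o₁`. -/
theorem statement3 (a μ1 μ2 : ℝ) (ha : 0 < a) (t₁ t₂ : ℝ) (q p : ℝ → R3)
    (hcent : ∀ t ∈ Set.Ioo t₁ t₂, q t ≠ ctr1 a)
    (hq : ∀ t ∈ Set.Ioo t₁ t₂, HasDerivAt q (p t) t)
    (hp : ∀ t ∈ Set.Ioo t₁ t₂, HasDerivAt p (-gradient (kepV1 a μ1 μ2) (q t)) t) :
    ∀ s ∈ Set.Ioo t₁ t₂, ∀ t ∈ Set.Ioo t₁ t₂,
      kepG1 a μ1 μ2 (q s) (p s) = kepG1 a μ1 μ2 (q t) (p t) := by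
  have hg' : ∀ u ∈ Set.Ioo t₁ t₂, HasDerivAt (fun τ => kepG1 a μ1 μ2 (q τ) (p τ)) 0 u :=
    fun u hu => kepG1_deriv_zero a μ1 μ2 q p u (hcent u hu) (hq u hu) (hp u hu)
  have key : ∀ s ∈ Set.Ioo t₁ t₂, ∀ t ∈ Set.Ioo t₁ t₂, s ≤ t →
      kepG1 a μ1 μ2 (q s) (p s) = kepG1 a μ1 μ2 (q t) (p t) := by
    intro s hs t ht hst
    have hsub : Set.Icc s t ⊆ Set.Ioo t₁ t₂ := fun x hx =>
      ⟨lt_of_lt_of_le hs.1 hx.1, lt_of_le_of_lt hx.2 ht.2⟩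
    have := constant_of_has_deriv_right_zero
      (f := fun τ => kepG1 a μ1 μ2 (q τ) (p τ)) (a := s) (b := t)
      (fun x hx => (hg' x (hsub hx)).continuousAt.continuousWithinAt)
      (fun x hx => (hg' x (hsub ⟨hx.1, hx.2.le⟩)).hasDerivWithinAt)
    exact (this t ⟨hst, le_refl t⟩).symm
  intro s hs t ht
  rcases le_total s t with h | h
  · exact key s hs t ht h
  · exact (key t ht s hs h).symm
end
end

section
/- The free flow fails to be a reference for the Euler problem unless μ₁ = μ₂: fix c > 0 and consider the free trajectory q(t) = (c, 0, t), p(t) = (0, 0, 1). Then lim_{t→+∞} G(q(t), p(t)) = 1/2 + c²/2 + a(μ₁ − μ₂) and lim_{t→−∞} G(q(t), p(t)) = 1/2 + c²/2 − a(μ₁ − μ₂). In particular the two limits differ by 2a(μ₁ − μ₂), so they are equal for all such trajectories only if μ₁ = μ₂. -/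
noncomputable section

open Real Filter Topology
open scoped RealInnerProductSpace

lemma vec3_apply' (x y z : ℝ) (i : Fin 3) : vec3 x y z i = ![x,y,z] i := rfl

lemma vec3_sub' (x y z x' y' z' : ℝ) :
    vec3 x y z - vec3 x' y' z' = vec3 (x-x') (y-y') (z-z') := by
  ext i; fin_cases i <;> simp [vec3]

lemma norm_vec3' (x y z : ℝ) : ‖vec3 x y z‖ = Real.sqrt (x^2+y^2+z^2) := by
  simp [vec3, EuclideanSpace.norm_eq, Fin.sum_univ_three, sq]

lemma lim_aux (A B C : ℝ) :
    Tendsto (fun s : ℝ => (A*s+B)/Real.sqrt (C^2+s^2)) atTop (𝓝 A) := by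
  have h : ∀ᶠ s in atTop, (A*s+B)/Real.sqrt (C^2+s^2)
      = (A + B/s)/Real.sqrt (C^2/s^2+1) := by
    filter_upwards [eventually_gt_atTop (0:ℝ)] with s hs
    have h1 : C^2+s^2 = s^2*(C^2/s^2+1) := by field_simp
    rw [h1, Real.sqrt_mul (sq_nonneg s), Real.sqrt_sq hs.le, div_mul_eq_div_div,
      add_div, mul_div_assoc, div_self hs.ne', mul_one]
  rw [tendsto_congr' h]
  have hs2 : Tendsto (fun s : ℝ => s^2) atTop atTop := tendsto_pow_atTop two_ne_zero
  have h0 : Tendsto (fun s : ℝ => C^2/s^2) atTop (𝓝 0) :=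
    Tendsto.div_atTop tendsto_const_nhds hs2
  have h0' : Tendsto (fun s : ℝ => B/s) atTop (𝓝 0) :=
    Tendsto.div_atTop tendsto_const_nhds tendsto_id
  have hden : Tendsto (fun s : ℝ => Real.sqrt (C^2/s^2+1)) atTop (𝓝 1) := by
    have := ((h0.add (tendsto_const_nhds (x := (1:ℝ)))).sqrt)
    simpa using this
  have hnum : Tendsto (fun s : ℝ => A + B/s) atTop (𝓝 A) := by
    simpa using tendsto_const_nhds.add h0'
  have := hnum.div hden one_ne_zero; rw [div_one] at this; exact this

lemma lim_aux_bot (A B C : ℝ) :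
    Tendsto (fun s : ℝ => (A*s+B)/Real.sqrt (C^2+s^2)) atBot (𝓝 (-A)) := by
  have := (lim_aux (-A) B C).comp tendsto_neg_atBot_atTop
  refine this.congr fun s => ?_
  simp only [Function.comp]
  ring_nf

lemma G_eq (a μ1 μ2 c t : ℝ) (hc : 0 < c) :
    eulerG a μ1 μ2 (vec3 c 0 t) (vec3 0 0 1) =
      1/2 + c^2/2 + μ1 * ((a*(t+a)+(-1))/Real.sqrt (c^2+(t+a)^2))
        - μ2 * ((a*(t-a)+1)/Real.sqrt (c^2+(t-a)^2)) := by
  have e1 : (c - 0)^2 + ((0:ℝ)-0)^2 + (t - -a)^2 = c^2+(t+a)^2 := by ring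
  have e2 : (c - 0)^2 + ((0:ℝ)-0)^2 + (t - a)^2 = c^2+(t-a)^2 := by ring
  have r1pos : (0:ℝ) < Real.sqrt (c^2+(t+a)^2) := Real.sqrt_pos.2 (by positivity)
  have r2pos : (0:ℝ) < Real.sqrt (c^2+(t-a)^2) := Real.sqrt_pos.2 (by positivity)
  simp only [eulerG, eulerH, eulerV, cross3, ctr1, ctr2, vec3_sub', vec3_apply']
  rw [norm_vec3', norm_vec3', norm_vec3', norm_vec3', e1, e2]
  simp only [Matrix.cons_val_zero, Matrix.cons_val_one, Matrix.head_cons,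
    Matrix.cons_val_two, Matrix.tail_cons]
  rw [show ((0:ℝ)^2+0^2+1^2) = 1 by norm_num, Real.sqrt_one]
  rw [Real.sq_sqrt (by positivity : (0:ℝ) ≤ (0*1-t*0)^2+(t*0-c*1)^2+(c*0-0*0)^2)]
  field_simp
  ring

/-- Along the free trajectory `q(t) = (c,0,t)`, `p(t) = (0,0,1)`, the
separation constant `G` has limits `1/2 + c²/2 ± a(μ₁−μ₂)` as `t → ±∞`; in particular
the two limits differ by `2a(μ₁−μ₂)`, so the free flow is a reference for the Euler
problem only if `μ₁ = μ₂`. -/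
theorem statement16 (a μ1 μ2 : ℝ) (ha : 0 < a) (c : ℝ) (hc : 0 < c) :
    Tendsto (fun t : ℝ => eulerG a μ1 μ2 (vec3 c 0 t) (vec3 0 0 1)) atTop
      (𝓝 (1 / 2 + c ^ 2 / 2 + a * (μ1 - μ2))) ∧
    Tendsto (fun t : ℝ => eulerG a μ1 μ2 (vec3 c 0 t) (vec3 0 0 1)) atBot
      (𝓝 (1 / 2 + c ^ 2 / 2 - a * (μ1 - μ2))) ∧
    (1 / 2 + c ^ 2 / 2 + a * (μ1 - μ2)) - (1 / 2 + c ^ 2 / 2 - a * (μ1 - μ2))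
      = 2 * a * (μ1 - μ2) := by
  refine ⟨?_, ?_, by ring⟩
  · have h1 : Tendsto (fun t : ℝ => (a*(t+a)+(-1))/Real.sqrt (c^2+(t+a)^2)) atTop (𝓝 a) :=
      (lim_aux a (-1) c).comp (tendsto_atTop_add_const_right atTop a tendsto_id)
    have h2 : Tendsto (fun t : ℝ => (a*(t-a)+1)/Real.sqrt (c^2+(t-a)^2)) atTop (𝓝 a) := by
      simpa [Function.comp_def, sub_eq_add_neg] using
        (lim_aux a 1 c).comp (tendsto_atTop_add_const_right atTop (-a) tendsto_id)
    have hT := (tendsto_const_nhds (x := 1/2 + c^2/2)).add (h1.const_mul μ1) |>.sub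
      (h2.const_mul μ2)
    have heq : 1 / 2 + c ^ 2 / 2 + a * (μ1 - μ2) = 1/2 + c^2/2 + μ1 * a - μ2 * a := by ring
    rw [heq]
    exact hT.congr fun t => (G_eq a μ1 μ2 c t hc).symm
  · have h1 : Tendsto (fun t : ℝ => (a*(t+a)+(-1))/Real.sqrt (c^2+(t+a)^2)) atBot (𝓝 (-a)) :=
      (lim_aux_bot a (-1) c).comp (tendsto_atBot_add_const_right atBot a tendsto_id)
    have h2 : Tendsto (fun t : ℝ => (a*(t-a)+1)/Real.sqrt (c^2+(t-a)^2)) atBot (𝓝 (-a)) := by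
      simpa [Function.comp_def, sub_eq_add_neg] using
        (lim_aux_bot a 1 c).comp (tendsto_atBot_add_const_right atBot (-a) tendsto_id)
    have hT := (tendsto_const_nhds (x := 1/2 + c^2/2)).add (h1.const_mul μ1) |>.sub
      (h2.const_mul μ2)
    have heq : 1 / 2 + c ^ 2 / 2 - a * (μ1 - μ2) = 1/2 + c^2/2 + μ1 * (-a) - μ2 * (-a) := by
      ring
    rw [heq]
    exact hT.congr fun t => (G_eq a μ1 μ2 c t hc).symm
end
end

section
/- First-derivative short-range estimate for the Euler potential relative to the Kepler potential of strength μ₁ + μ₂: there exists a constant C > 0 such that for every q ∈ ℝ³ with ‖q‖ ≥ 2a one has ‖∇V(q) − (μ₁ + μ₂)q/‖q‖³‖ ≤ C/‖q‖³. -/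
noncomputable section

open Real Filter Topology
open scoped RealInnerProductSpace

section Aux

variable {F : Type*} [NormedAddCommGroup F] [InnerProductSpace ℝ F] [CompleteSpace F]

/-- Gradient of the shifted Kepler-type potential `x ↦ -μ/‖x - c‖`. -/
theorem grad_aux18 (μ : ℝ) (c q : F) (h : q ≠ c) :
    HasGradientAt (fun x => -μ / ‖x - c‖) ((μ / ‖q - c‖ ^ 3) • (q - c)) q := by
  have hne : ‖q - c‖ ≠ 0 := by simpa [sub_eq_zero] using h
  have hpos : (0:ℝ) < ‖q - c‖ := lt_of_le_of_ne (norm_nonneg _) (Ne.symm hne)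
  have hg : HasFDerivAt (fun x : F => ‖x - c‖ ^ 2)
      (2 • (innerSL ℝ (q - c)).comp (ContinuousLinearMap.id ℝ F)) q := by
    simpa using ((hasFDerivAt_id q).sub_const c).norm_sq
  have hs2 : (‖q - c‖ ^ 2 : ℝ) ≠ 0 := pow_ne_zero _ hne
  have hsqrt : Real.sqrt (‖q - c‖ ^ 2) = ‖q - c‖ := Real.sqrt_sq (norm_nonneg _)
  have hφ : HasDerivAt (fun t : ℝ => -μ / Real.sqrt t)
      (μ / (2 * ‖q - c‖ ^ 3)) (‖q - c‖ ^ 2) := by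
    have h1 := (Real.hasDerivAt_sqrt hs2).inv (by rw [hsqrt]; exact hne)
    have h2 := h1.const_mul (-μ)
    have hval : -μ * (-(1 / (2 * Real.sqrt (‖q - c‖ ^ 2))) / Real.sqrt (‖q - c‖ ^ 2) ^ 2)
        = μ / (2 * ‖q - c‖ ^ 3) := by
      rw [hsqrt]; field_simp
    rw [hval] at h2
    simpa [div_eq_mul_inv] using h2
  have hcomp := hφ.comp_hasFDerivAt q hg
  rw [hasGradientAt_iff_hasFDerivAt]
  convert hcomp using 1
  · rfl
  · funext w
    simp only [Function.comp_apply, Real.sqrt_sq (norm_nonneg (w - c))]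
  · ext w
    simp only [InnerProductSpace.toDual_apply_apply, ContinuousLinearMap.smul_apply,
      ContinuousLinearMap.coe_comp', Function.comp_apply, ContinuousLinearMap.coe_id', id_eq,
      innerSL_apply_apply, real_inner_smul_left, smul_eq_mul]
    ring

/-- Sum rule for gradients. -/
theorem HasGradientAt.add18 {f g : F → ℝ} {v w x : F}
    (hf : HasGradientAt f v x) (hg : HasGradientAt g w x) :
    HasGradientAt (fun y => f y + g y) (v + w) x := by
  rw [hasGradientAt_iff_hasFDerivAt] at hf hg ⊢
  rw [map_add]
  exact hf.add hg

/-- Quantitative comparison of the shifted and unshifted Kepler fields. -/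
theorem key_est18 (a : ℝ) (ha : 0 < a) (c q : F) (hc : ‖c‖ = a) (hq : 2 * a ≤ ‖q‖) :
    ‖(1 / ‖q - c‖ ^ 3) • (q - c) - (1 / ‖q‖ ^ 3) • q‖ ≤ 20 * a / ‖q‖ ^ 3 := by
  set r := ‖q‖ with hr
  set s := ‖q - c‖ with hs
  have hrpos : 0 < r := lt_of_lt_of_le (by linarith) hq
  have habs : |r - s| ≤ a := by
    have := abs_norm_sub_norm_le q (q - c)
    simpa [hc] using this
  have hs1 : r - a ≤ s := by have := abs_le.1 habs; linarith [this.1]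
  have har : a ≤ r / 2 := by linarith
  have hspos : 0 < s := by linarith
  have hr2s : r ≤ 2 * s := by linarith
  have hdecomp : (1 / s ^ 3) • (q - c) - (1 / r ^ 3) • q
      = (1 / s ^ 3 - 1 / r ^ 3) • (q - c) - (1 / r ^ 3) • c := by
    module
  rw [hdecomp]
  have h1 : ‖(1 / s ^ 3 - 1 / r ^ 3) • (q - c)‖ = |1 / s ^ 3 - 1 / r ^ 3| * s := by
    rw [norm_smul]; rfl
  have h2 : ‖(1 / r ^ 3) • c‖ = (1 / r ^ 3) * a := by
    rw [norm_smul, hc]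
    congr 1
    rw [Real.norm_eq_abs, abs_of_pos (by positivity)]
  have hfac : |1 / s ^ 3 - 1 / r ^ 3| = |r - s| * (r ^ 2 + r * s + s ^ 2) / (s ^ 3 * r ^ 3) := by
    rw [div_sub_div _ _ (by positivity) (by positivity), abs_div,
      abs_of_pos (show (0:ℝ) < s ^ 3 * r ^ 3 by positivity), one_mul, mul_one,
      show r ^ 3 - s ^ 3 = (r - s) * (r ^ 2 + r * s + s ^ 2) by ring, abs_mul,
      abs_of_pos (show (0:ℝ) < r ^ 2 + r * s + s ^ 2 by positivity)]
  have h7 : r ^ 2 + r * s + s ^ 2 ≤ 7 * s ^ 2 := by nlinarith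
  have hAs : |r - s| * (r ^ 2 + r * s + s ^ 2) * s ≤ 19 * a * s ^ 3 := by
    have step : |r - s| * (r ^ 2 + r * s + s ^ 2) ≤ a * (7 * s ^ 2) :=
      mul_le_mul habs h7 (by positivity) (le_of_lt ha)
    calc |r - s| * (r ^ 2 + r * s + s ^ 2) * s
        ≤ a * (7 * s ^ 2) * s := mul_le_mul_of_nonneg_right step hspos.le
      _ = 7 * a * s ^ 3 := by ring
      _ ≤ 19 * a * s ^ 3 := by nlinarith [pow_pos hspos 3]
  have e2 : |r - s| * (r ^ 2 + r * s + s ^ 2) / (s ^ 3 * r ^ 3) * s ≤ 19 * a / r ^ 3 := by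
    rw [div_mul_eq_mul_div, div_le_div_iff₀ (by positivity) (by positivity)]
    calc |r - s| * (r ^ 2 + r * s + s ^ 2) * s * r ^ 3
        ≤ 19 * a * s ^ 3 * r ^ 3 := mul_le_mul_of_nonneg_right hAs (by positivity)
      _ = 19 * a * (s ^ 3 * r ^ 3) := by ring
  calc ‖(1 / s ^ 3 - 1 / r ^ 3) • (q - c) - (1 / r ^ 3) • c‖
      ≤ ‖(1 / s ^ 3 - 1 / r ^ 3) • (q - c)‖ + ‖(1 / r ^ 3) • c‖ := norm_sub_le _ _
    _ = |1 / s ^ 3 - 1 / r ^ 3| * s + (1 / r ^ 3) * a := by rw [h1, h2]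
    _ ≤ 19 * a / r ^ 3 + a / r ^ 3 := by
        rw [hfac]
        have : (1 / r ^ 3) * a = a / r ^ 3 := by ring
        linarith [e2]
    _ = 20 * a / r ^ 3 := by ring

end Aux

theorem norm_ctr118 (a : ℝ) (ha : 0 < a) : ‖ctr1 a‖ = a := by
  simp [ctr1, vec3, EuclideanSpace.norm_eq, Fin.sum_univ_three]
  rw [Real.sqrt_eq_iff_eq_sq] <;> nlinarith

theorem norm_ctr218 (a : ℝ) (ha : 0 < a) : ‖ctr2 a‖ = a := by
  simp [ctr2, vec3, EuclideanSpace.norm_eq, Fin.sum_univ_three]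
  rw [Real.sqrt_eq_iff_eq_sq] <;> nlinarith

/-- First-derivative short-range estimate for the Euler potential
relative to the Kepler potential of strength `μ₁ + μ₂` centered at the origin:
there is `C > 0` with `‖∇V(q) − (μ₁+μ₂)q/‖q‖³‖ ≤ C/‖q‖³` whenever `‖q‖ ≥ 2a`. -/
theorem statement18 (a μ1 μ2 : ℝ) (ha : 0 < a) :
    ∃ C > 0, ∀ q : R3, 2 * a ≤ ‖q‖ →
      ‖gradient (eulerV a μ1 μ2) q - ((μ1 + μ2) / ‖q‖ ^ 3) • q‖ ≤ C / ‖q‖ ^ 3 := by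
  refine ⟨20 * a * (|μ1| + |μ2|) + 1, by positivity, fun q hq => ?_⟩
  have hrpos : (0:ℝ) < ‖q‖ := lt_of_lt_of_le (by linarith) hq
  have hq1 : q ≠ ctr1 a := by
    intro h
    rw [h, norm_ctr118 a ha] at hq
    linarith
  have hq2 : q ≠ ctr2 a := by
    intro h
    rw [h, norm_ctr218 a ha] at hq
    linarith
  have hfun : eulerV a μ1 μ2
      = fun y => (-μ1 / ‖y - ctr1 a‖) + (-μ2 / ‖y - ctr2 a‖) := by
    funext y
    simp [eulerV, neg_div, sub_eq_add_neg]
  have hG : HasGradientAt (eulerV a μ1 μ2)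
      ((μ1 / ‖q - ctr1 a‖ ^ 3) • (q - ctr1 a) + (μ2 / ‖q - ctr2 a‖ ^ 3) • (q - ctr2 a)) q := by
    rw [hfun]
    exact (grad_aux18 μ1 (ctr1 a) q hq1).add18 (grad_aux18 μ2 (ctr2 a) q hq2)
  rw [hG.gradient]
  have hdecomp :
      (μ1 / ‖q - ctr1 a‖ ^ 3) • (q - ctr1 a) + (μ2 / ‖q - ctr2 a‖ ^ 3) • (q - ctr2 a)
        - ((μ1 + μ2) / ‖q‖ ^ 3) • q
      = μ1 • ((1 / ‖q - ctr1 a‖ ^ 3) • (q - ctr1 a) - (1 / ‖q‖ ^ 3) • q)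
        + μ2 • ((1 / ‖q - ctr2 a‖ ^ 3) • (q - ctr2 a) - (1 / ‖q‖ ^ 3) • q) := by
    have h3 : (‖q - ctr1 a‖:ℝ) ^ 3 ≠ 0 := by
      exact pow_ne_zero _ (norm_ne_zero_iff.2 (sub_ne_zero.2 hq1))
    have h4 : (‖q - ctr2 a‖:ℝ) ^ 3 ≠ 0 := by
      exact pow_ne_zero _ (norm_ne_zero_iff.2 (sub_ne_zero.2 hq2))
    have h5 : (‖q‖:ℝ) ^ 3 ≠ 0 := by positivity
    match_scalars <;> field_simp <;> ring
  rw [hdecomp]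
  have e1 := key_est18 a ha (ctr1 a) q (norm_ctr118 a ha) hq
  have e2 := key_est18 a ha (ctr2 a) q (norm_ctr218 a ha) hq
  calc ‖μ1 • ((1 / ‖q - ctr1 a‖ ^ 3) • (q - ctr1 a) - (1 / ‖q‖ ^ 3) • q)
        + μ2 • ((1 / ‖q - ctr2 a‖ ^ 3) • (q - ctr2 a) - (1 / ‖q‖ ^ 3) • q)‖
      ≤ ‖μ1 • ((1 / ‖q - ctr1 a‖ ^ 3) • (q - ctr1 a) - (1 / ‖q‖ ^ 3) • q)‖
        + ‖μ2 • ((1 / ‖q - ctr2 a‖ ^ 3) • (q - ctr2 a) - (1 / ‖q‖ ^ 3) • q)‖ := norm_add_le _ _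
    _ = |μ1| * ‖(1 / ‖q - ctr1 a‖ ^ 3) • (q - ctr1 a) - (1 / ‖q‖ ^ 3) • q‖
        + |μ2| * ‖(1 / ‖q - ctr2 a‖ ^ 3) • (q - ctr2 a) - (1 / ‖q‖ ^ 3) • q‖ := by
          rw [norm_smul, norm_smul]; rfl
    _ ≤ |μ1| * (20 * a / ‖q‖ ^ 3) + |μ2| * (20 * a / ‖q‖ ^ 3) := by
        gcongr
    _ = (20 * a * (|μ1| + |μ2|)) / ‖q‖ ^ 3 := by ring
    _ ≤ (20 * a * (|μ1| + |μ2|) + 1) / ‖q‖ ^ 3 := by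
        gcongr
        linarith
end
end
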